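/- arXiv:1910.10918 — 2 statements merged into one kernel-verified Lean document; each statement's English description precedes it below -/
import Mathlib

section
/- If c ∈ [1/2, 1) and P ∈ SO(3) preserves the cube C₀ = [-1,1]³, then the attractor A(c,P) is an imaginary cube of the cube C = (1/(1-c))·C₀. -/
/- STATEMENT 7: If `c ∈ [1/2, 1)` and `P ∈ SO(3)` preserves the cube `C₀ = [-1,1]³`,
then the attractor `A(c,P)` is an imaginary cube of `C = (1/(1-c)) • C₀`. -/

noncomputable section
open Matrix Pointwise

abbrev E3 := EuclideanSpace ℝ (Fin 3)

/-- The standard cube `C₀ = [-1,1]³`. -/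
def C0 : Set E3 := {x | ∀ i, x i ∈ Set.Icc (-1 : ℝ) 1}

/-- The cube `a • Q C₀ + w`. -/
def cubeImage (a : ℝ) (Q : Matrix (Fin 3) (Fin 3) ℝ) (w : E3) : Set E3 :=
  (fun x => a • Matrix.toEuclideanLin Q x + w) '' C0

/-- The plane parallel to the face of the cube `a Q C₀ + w` orthogonal to direction `Q eᵢ`:
the span of the images of the other two coordinate vectors. -/
def facePlane (Q : Matrix (Fin 3) (Fin 3) ℝ) (i : Fin 3) : Submodule ℝ E3 :=
  Submodule.span ℝ {y | ∃ j ≠ i, y = Matrix.toEuclideanLin Q (EuclideanSpace.single j 1)}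

/-- `A` is an imaginary cube of the cube with data `(a, Q, w)`: the three projections of `A`
in the face directions agree with those of the cube. -/
def IsImaginaryCubeData (A : Set E3) (a : ℝ) (Q : Matrix (Fin 3) (Fin 3) ℝ) (w : E3) : Prop :=
  ∀ i : Fin 3,
    (Submodule.orthogonalProjection (facePlane Q i)) '' A =
      (Submodule.orthogonalProjection (facePlane Q i)) '' (cubeImage a Q w)

/-- `A` is an imaginary cube of the set `C`. -/
def IsImaginaryCubeOf (A C : Set E3) : Prop :=
  ∃ (a : ℝ) (Q : Matrix (Fin 3) (Fin 3) ℝ) (w : E3),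
    0 < a ∧ Q ∈ Matrix.specialOrthogonalGroup (Fin 3) ℝ ∧ C = cubeImage a Q w ∧
      IsImaginaryCubeData A a Q w

/-- `A` is an imaginary cube. -/
def IsImaginaryCube (A : Set E3) : Prop := ∃ C : Set E3, IsImaginaryCubeOf A C

def vtx : Fin 4 → E3 :=
  ![!₂[1, -1, 1], !₂[-1, 1, 1], !₂[-1, -1, -1], !₂[1, 1, -1]]

def fmap (c : ℝ) (P : Matrix (Fin 3) (Fin 3) ℝ) (i : Fin 4) (x : E3) : E3 :=
  c • Matrix.toEuclideanLin P x + vtx i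

def IsAttractor (c : ℝ) (P : Matrix (Fin 3) (Fin 3) ℝ) (A : Set E3) : Prop :=
  A.Nonempty ∧ IsCompact A ∧ A = ⋃ i : Fin 4, fmap c P i '' A


namespace AttractorProof

lemma toEL_apply (M : Matrix (Fin 3) (Fin 3) ℝ) (x : E3) (k : Fin 3) :
    Matrix.toEuclideanLin M x k = ∑ j, M k j * x j := by
  simp [Matrix.toEuclideanLin_apply, Matrix.mulVec, dotProduct]

/-- The coordinate-killing projection as a linear map. -/
def ppL (i : Fin 3) : E3 →ₗ[ℝ] E3 where
  toFun x := x - x i • EuclideanSpace.single i 1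
  map_add' x y := by
    ext k
    simp only [PiLp.add_apply, PiLp.sub_apply, PiLp.smul_apply, smul_eq_mul]
    ring
  map_smul' c x := by
    ext k
    simp only [PiLp.smul_apply, PiLp.sub_apply, smul_eq_mul, RingHom.id_apply]
    ring

lemma ppL_apply (i : Fin 3) (x : E3) (k : Fin 3) :
    ppL i x k = if k = i then 0 else x k := by
  have : ppL i x k = x k - x i * EuclideanSpace.single i (1:ℝ) k := rfl
  rw [this, EuclideanSpace.single_apply]
  split <;> rename_i h
  · subst h; simp
  · simp [h]

lemma toEL_one (x : E3) : Matrix.toEuclideanLin (1 : Matrix (Fin 3) (Fin 3) ℝ) x = x := by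
  ext k
  simp [Matrix.toEuclideanLin_apply]

lemma sum_single (x : E3) : (∑ j, x j • EuclideanSpace.single j (1:ℝ)) = x := by
  ext k
  rw [show (∑ j, x j • EuclideanSpace.single j (1:ℝ)) k
      = ∑ j, (x j • EuclideanSpace.single j (1:ℝ)) k from rfl]
  simp [EuclideanSpace.single_apply]

lemma norm_le_sum_abs (x : E3) : ‖x‖ ≤ ∑ j, |x j| := by
  calc ‖x‖ = ‖∑ j, x j • EuclideanSpace.single j (1:ℝ)‖ := by rw [sum_single]
  _ ≤ ∑ j, ‖x j • EuclideanSpace.single j (1:ℝ)‖ := norm_sum_le _ _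
  _ = ∑ j, |x j| := by
      apply Finset.sum_congr rfl
      intro j _
      rw [norm_smul, EuclideanSpace.norm_single]
      simp [Real.norm_eq_abs]

lemma proj_eq_ppL (i : Fin 3) (x : E3) :
    (Submodule.orthogonalProjection (facePlane 1 i) x : E3) = ppL i x := by
  have hgen : {y : E3 | ∃ j ≠ i, y = Matrix.toEuclideanLin (1:Matrix (Fin 3) (Fin 3) ℝ)
      (EuclideanSpace.single j 1)} = {y : E3 | ∃ j ≠ i, y = EuclideanSpace.single j 1} := by
    simp only [toEL_one]
  have hmem : ppL i x ∈ facePlane 1 i := by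
    rw [facePlane, hgen]
    have : ppL i x = ∑ j, (ppL i x j) • EuclideanSpace.single j (1:ℝ) := (sum_single _).symm
    rw [this]
    apply Submodule.sum_mem
    intro j _
    rcases eq_or_ne j i with h | h
    · subst h
      rw [ppL_apply]; simp
    · exact Submodule.smul_mem _ _ (Submodule.subset_span ⟨j, h, rfl⟩)
  have horth : ∀ w ∈ facePlane 1 i, inner (𝕜 := ℝ) (x - ppL i x) w = 0 := by
    intro w hw
    rw [facePlane, hgen] at hw
    have hxp : x - ppL i x = x i • EuclideanSpace.single i 1 := by
      have : ppL i x = x - x i • EuclideanSpace.single i 1 := rfl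
      rw [this]; module
    rw [hxp]
    induction hw using Submodule.span_induction with
    | mem y hy =>
      obtain ⟨j, hj, rfl⟩ := hy
      rw [real_inner_smul_left, EuclideanSpace.inner_single_left]
      simp [EuclideanSpace.single_apply, hj, Ne.symm hj]
    | zero => simp
    | add y z _ _ hy hz => rw [inner_add_right, hy, hz, add_zero]
    | smul a y _ hy => rw [inner_smul_right, hy, mul_zero]
  exact Submodule.eq_starProjection_of_mem_of_inner_eq_zero (u := x) hmem horth

lemma signed_perm {P : Matrix (Fin 3) (Fin 3) ℝ}
    (hP : P ∈ Matrix.specialOrthogonalGroup (Fin 3) ℝ)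
    (hPC : Matrix.toEuclideanLin P '' C0 = C0) :
    ∃ (e : Fin 3 ≃ Fin 3) (ε : Fin 3 → ℝ), (∀ k, ε k = 1 ∨ ε k = -1) ∧
      ∀ (x : E3) (k : Fin 3), Matrix.toEuclideanLin P x k = ε k * x (e k) := by
  classical
  obtain ⟨⟨h1, h2⟩, _⟩ := hP
  have ht : Pᵀ * P = 1 := by simpa [Matrix.star_eq_conjTranspose] using h1
  have ht2 : P * Pᵀ = 1 := by simpa [Matrix.star_eq_conjTranspose] using h2
  have hrow : ∀ k, ∑ j, P k j ^ 2 = 1 := by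
    intro k
    have := congrFun (congrFun ht2 k) k
    simpa [Matrix.mul_apply, Matrix.one_apply, sq] using this
  have hcol : ∀ j, ∑ k, P k j ^ 2 = 1 := by
    intro j
    have := congrFun (congrFun ht j) j
    simpa [Matrix.mul_apply, Matrix.one_apply, sq] using this
  have hmem : ∀ x ∈ C0, ∀ k, |Matrix.toEuclideanLin P x k| ≤ 1 := by
    intro x hx k
    have : Matrix.toEuclideanLin P x ∈ C0 := hPC ▸ Set.mem_image_of_mem _ hx
    have := this k
    rw [abs_le]; exact ⟨this.1, this.2⟩
  have hent : ∀ k j, |P k j| ≤ 1 := by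
    intro k j
    have hx : (EuclideanSpace.single j (1:ℝ)) ∈ C0 := by
      intro m; simp only [EuclideanSpace.single_apply, Set.mem_Icc]
      split <;> norm_num
    have h := hmem _ hx k
    rw [toEL_apply] at h
    simpa [EuclideanSpace.single_apply, mul_ite, Finset.sum_ite_eq'] using h
  have hrowabs : ∀ k, ∑ j, |P k j| ≤ 1 := by
    intro k
    have hx : WithLp.toLp 2 (fun j => if 0 ≤ P k j then (1:ℝ) else -1) ∈ C0 := by
      intro m; simp only [Set.mem_Icc, WithLp.ofLp_toLp]; split <;> norm_num
    have h := hmem _ hx k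
    rw [toEL_apply] at h
    simp only [WithLp.ofLp_toLp] at h
    have heq : (∑ j, P k j * (if 0 ≤ P k j then (1:ℝ) else -1)) = ∑ j, |P k j| := by
      apply Finset.sum_congr rfl
      intro j _
      rcases le_or_gt 0 (P k j) with h' | h'
      · simp [h', abs_of_nonneg h']
      · simp [not_le.mpr h', abs_of_neg h']
    rw [heq] at h
    exact (le_abs_self _).trans h
  have hsq : ∀ k j, P k j ^ 2 = |P k j| := by
    intro k j
    have hle : ∀ j' : Fin 3, P k j' ^ 2 ≤ |P k j'| := by
      intro j'
      calc P k j' ^ 2 = |P k j'| * |P k j'| := by rw [← sq_abs, sq]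
      _ ≤ 1 * |P k j'| := mul_le_mul_of_nonneg_right (hent k j') (abs_nonneg _)
      _ = |P k j'| := one_mul _
    have hsum : ∑ j', |P k j'| ≤ ∑ j', P k j' ^ 2 := by
      rw [hrow k]; exact hrowabs k
    exact (Finset.sum_eq_sum_iff_of_le (fun j' _ => hle j')).mp
      (le_antisymm (Finset.sum_le_sum fun j' _ => hle j') hsum) j (Finset.mem_univ j)
  have h01 : ∀ k j, P k j = 0 ∨ |P k j| = 1 := by
    intro k j
    have : |P k j| * (|P k j| - 1) = 0 := by
      have : |P k j| ^ 2 = |P k j| := by rw [sq_abs]; exact hsq k j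
      nlinarith [this]
    rcases mul_eq_zero.mp this with h | h
    · exact Or.inl (abs_eq_zero.mp h)
    · exact Or.inr (by linarith)
  have hex : ∀ k, ∃ j, |P k j| = 1 := by
    intro k
    by_contra hcon
    push_neg at hcon
    have hz : ∀ j : Fin 3, P k j = 0 := fun j => (h01 k j).resolve_right (hcon j)
    have := hrow k
    simp [hz] at this
  choose τ hτ using hex
  have hzero : ∀ k j, j ≠ τ k → P k j = 0 := by
    intro k j hj
    rcases h01 k j with h | h
    · exact h
    · exfalso
      have hpair : |P k (τ k)| + |P k j| ≤ ∑ j', |P k j'| := by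
        rw [← Finset.sum_pair (f := fun j' => |P k j'|) (Ne.symm hj)]
        exact Finset.sum_le_sum_of_subset_of_nonneg (Finset.subset_univ _)
          (fun _ _ _ => abs_nonneg _)
      rw [hτ k, h] at hpair
      have := hpair.trans (hrowabs k)
      norm_num at this
  have hτinj : Function.Injective τ := by
    intro k k' hkk'
    by_contra hne
    have hpair : P k (τ k) ^ 2 + P k' (τ k) ^ 2 ≤ ∑ m, P m (τ k) ^ 2 := by
      rw [← Finset.sum_pair (f := fun m => P m (τ k) ^ 2) hne]
      exact Finset.sum_le_sum_of_subset_of_nonneg (Finset.subset_univ _)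
        (fun _ _ _ => sq_nonneg _)
    rw [hcol] at hpair
    rw [hsq, hsq, hτ k] at hpair
    rw [hkk', hτ k'] at hpair
    norm_num at hpair
  refine ⟨Equiv.ofBijective τ (Finite.injective_iff_bijective.mp hτinj),
    fun k => P k (τ k), fun k => ?_, fun x k => ?_⟩
  · rcases abs_eq (by norm_num : (0:ℝ) ≤ 1) |>.mp (hτ k) with h | h
    · exact Or.inl h
    · exact Or.inr h
  · rw [toEL_apply]
    rw [Finset.sum_eq_single (τ k) (fun b _ hb => by rw [hzero k b hb, zero_mul])
      (fun h => absurd (Finset.mem_univ _) h)]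
    rfl

end AttractorProof

namespace AttractorProof

/-- The square of half-side `a` in the coordinate plane `i`. -/
def Sq (a : ℝ) (i : Fin 3) : Set E3 := {z : E3 | z i = 0 ∧ ∀ j, |z j| ≤ a}

lemma vtx_abs (k : Fin 4) (j : Fin 3) : |vtx k j| ≤ 1 := by
  fin_cases k <;> fin_cases j <;> norm_num [vtx]

lemma vtx_sign (i : Fin 3) (s : Fin 3 → Bool) :
    ∃ k : Fin 4, ∀ j, j ≠ i → vtx k j = (if s j then (1:ℝ) else -1) := by
  have h0 : ∀ j : Fin 3, j ≠ 0 → j = 1 ∨ j = 2 := by decide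
  have h1 : ∀ j : Fin 3, j ≠ 1 → j = 0 ∨ j = 2 := by decide
  have h2 : ∀ j : Fin 3, j ≠ 2 → j = 0 ∨ j = 1 := by decide
  fin_cases i
  · cases hs1 : s 1 <;> cases hs2 : s 2
    · exact ⟨2, fun j hj => by rcases h0 j hj with rfl | rfl <;> simp [vtx, hs1, hs2]⟩
    · exact ⟨0, fun j hj => by rcases h0 j hj with rfl | rfl <;> simp [vtx, hs1, hs2]⟩
    · exact ⟨3, fun j hj => by rcases h0 j hj with rfl | rfl <;> simp [vtx, hs1, hs2]⟩
    · exact ⟨1, fun j hj => by rcases h0 j hj with rfl | rfl <;> simp [vtx, hs1, hs2]⟩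
  · cases hs0 : s 0 <;> cases hs2 : s 2
    · exact ⟨2, fun j hj => by rcases h1 j hj with rfl | rfl <;> simp [vtx, hs0, hs2]⟩
    · exact ⟨1, fun j hj => by rcases h1 j hj with rfl | rfl <;> simp [vtx, hs0, hs2]⟩
    · exact ⟨3, fun j hj => by rcases h1 j hj with rfl | rfl <;> simp [vtx, hs0, hs2]⟩
    · exact ⟨0, fun j hj => by rcases h1 j hj with rfl | rfl <;> simp [vtx, hs0, hs2]⟩
  · cases hs0 : s 0 <;> cases hs1 : s 1
    · exact ⟨2, fun j hj => by rcases h2 j hj with rfl | rfl <;> simp [vtx, hs0, hs1]⟩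
    · exact ⟨1, fun j hj => by rcases h2 j hj with rfl | rfl <;> simp [vtx, hs0, hs1]⟩
    · exact ⟨0, fun j hj => by rcases h2 j hj with rfl | rfl <;> simp [vtx, hs0, hs1]⟩
    · exact ⟨3, fun j hj => by rcases h2 j hj with rfl | rfl <;> simp [vtx, hs0, hs1]⟩

lemma projA {c : ℝ} {P : Matrix (Fin 3) (Fin 3) ℝ} (hc : c ∈ Set.Ico (1 / 2 : ℝ) 1)
    {e : Fin 3 ≃ Fin 3} {ε : Fin 3 → ℝ}
    (hε : ∀ k, ε k = 1 ∨ ε k = -1)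
    (hL : ∀ (x : E3) (k : Fin 3), Matrix.toEuclideanLin P x k = ε k * x (e k))
    {A : Set E3} (hA : IsAttractor c P A) (i : Fin 3) :
    ppL i '' A = Sq (1 / (1 - c)) i := by
  classical
  obtain ⟨hAne, hAcp, hAeq⟩ := hA
  have hc0 : (0:ℝ) < c := lt_of_lt_of_le (by norm_num) hc.1
  have hc1 : c < 1 := hc.2
  have h1c : (0:ℝ) < 1 - c := by linarith
  set a : ℝ := 1 / (1 - c) with ha_def
  have ha : 0 < a := by positivity
  have haa : a * (1 - c) = 1 := by rw [ha_def]; field_simp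
  have hca : c * a + 1 = a := by rw [ha_def]; field_simp; ring
  have hca1 : 1 ≤ c * a := by nlinarith [hc.1]
  set L := Matrix.toEuclideanLin P with hLdef
  have hεsq : ∀ k, ε k * ε k = 1 := by
    intro k; rcases hε k with h | h <;> rw [h] <;> norm_num
  have hεabs : ∀ k, |ε k| = 1 := by
    intro k; rcases hε k with h | h <;> rw [h] <;> norm_num
  have hLabs : ∀ (x : E3) k, |L x k| = |x (e k)| := by
    intro x k; rw [hL, abs_mul, hεabs, one_mul]
  have hLiso : ∀ x : E3, ‖L x‖ = ‖x‖ := by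
    intro x
    rw [EuclideanSpace.norm_eq, EuclideanSpace.norm_eq]
    congr 1
    rw [← Equiv.sum_comp e (fun j => ‖x j‖ ^ 2)]
    apply Finset.sum_congr rfl
    intro k _
    rw [Real.norm_eq_abs, Real.norm_eq_abs, hLabs]
  have hcomm : ∀ (m : Fin 3) (x : E3), ppL m (L x) = L (ppL (e m) x) := by
    intro m x
    ext k
    rw [ppL_apply, hL, hL, ppL_apply]
    by_cases h : k = m
    · simp [h]
    · rw [if_neg h, if_neg (fun hh => h (e.injective hh))]
  have hAsub : ∀ k, fmap c P k '' A ⊆ A := by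
    intro k
    conv_rhs => rw [hAeq]
    exact Set.subset_iUnion (fun k => fmap c P k '' A) k
  have hfdiff : ∀ (k : Fin 4) (u w : E3), fmap c P k u - fmap c P k w = c • L (u - w) := by
    intro k u w
    simp only [fmap, ← hLdef, map_sub, smul_sub]
    abel
  -- the sup-norm function
  set h : E3 → ℝ := fun x => ‖(WithLp.equiv 2 (Fin 3 → ℝ)) x‖ with hh_def
  have hcont : Continuous h := continuous_norm.comp (PiLp.continuous_ofLp 2 (fun _ : Fin 3 => ℝ))
  have habs_le : ∀ (x : E3) j, |x j| ≤ h x := by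
    intro x j
    have := norm_le_pi_norm ((WithLp.equiv 2 (Fin 3 → ℝ)) x) j
    rwa [Real.norm_eq_abs] at this
  have hle : ∀ (x : E3) (r : ℝ), 0 ≤ r → (∀ j, |x j| ≤ r) → h x ≤ r := by
    intro x r hr hx
    rw [hh_def]
    exact (pi_norm_le_iff_of_nonneg hr).mpr (fun j => by simpa [Real.norm_eq_abs] using hx j)
  -- A is contained in the cube of radius a
  have hbound : ∀ x ∈ A, ∀ j, |x j| ≤ a := by
    obtain ⟨x₀, hx₀A, hmax⟩ := hAcp.exists_isMaxOn hAne hcont.continuousOn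
    have hx₀' : x₀ ∈ ⋃ k : Fin 4, fmap c P k '' A := hAeq ▸ hx₀A
    obtain ⟨k, ⟨y, hyA, rfl⟩⟩ := Set.mem_iUnion.mp hx₀'
    have hstep : h (fmap c P k y) ≤ c * h y + 1 := by
      apply hle _ _ (by positivity)
      intro j
      have hcoord : fmap c P k y j = c * L y j + vtx k j := rfl
      rw [hcoord]
      calc |c * L y j + vtx k j| ≤ |c * L y j| + |vtx k j| := abs_add_le _ _
      _ ≤ c * |y (e j)| + 1 := by
          rw [abs_mul, abs_of_pos hc0, hLabs]
          exact add_le_add le_rfl (vtx_abs k j)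
      _ ≤ c * h y + 1 := by
          have := habs_le y (e j)
          nlinarith
    have hyx : h y ≤ h (fmap c P k y) := hmax hyA
    have hfix : h (fmap c P k y) ≤ a := by nlinarith
    intro x hxA j
    calc |x j| ≤ h x := habs_le x j
    _ ≤ h (fmap c P k y) := hmax hxA
    _ ≤ a := hfix
  -- the step lemma
  have hstep : ∀ (m : Fin 3) (z : E3), z ∈ Sq a m →
      ∃ (k : Fin 4) (z' : E3), z' ∈ Sq a (e m) ∧ z = c • L z' + ppL m (vtx k) := by
    intro m z hz
    obtain ⟨k, hk⟩ := vtx_sign m (fun j => decide (0 ≤ z j))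
    set w : E3 := z - ppL m (vtx k) with hw_def
    have hwcoord : ∀ j, w j = z j - ppL m (vtx k) j := fun j => rfl
    have hwi : w m = 0 := by
      rw [hwcoord, ppL_apply, if_pos rfl, hz.1, sub_zero]
    have hw : ∀ j, |w j| ≤ c * a := by
      intro j
      rcases eq_or_ne j m with hj | hj
      · rw [hj, hwi]; simp; positivity
      · rw [hwcoord, ppL_apply, if_neg hj, hk j hj]
        have hzj := hz.2 j
        rcases le_or_gt 0 (z j) with h' | h'
        · rw [if_pos (by simpa using h')]
          rw [abs_le] at hzj ⊢
          constructor <;> nlinarith [hzj.1, hzj.2]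
        · rw [if_neg (by simpa using not_le.mpr h')]
          rw [abs_le] at hzj ⊢
          constructor <;> nlinarith [hzj.1, hzj.2]
    refine ⟨k, WithLp.toLp 2 (fun j => c⁻¹ * (ε (e.symm j) * w (e.symm j)) : Fin 3 → ℝ), ?_, ?_⟩
    · constructor
      · show c⁻¹ * (ε (e.symm (e m)) * w (e.symm (e m))) = 0
        rw [e.symm_apply_apply, hwi, mul_zero, mul_zero]
      · intro j
        show |c⁻¹ * (ε (e.symm j) * w (e.symm j))| ≤ a
        rw [abs_mul, abs_mul, hεabs, one_mul, abs_of_pos (by positivity : (0:ℝ) < c⁻¹)]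
        calc c⁻¹ * |w (e.symm j)| ≤ c⁻¹ * (c * a) :=
          mul_le_mul_of_nonneg_left (hw _) (by positivity)
        _ = a := by field_simp
    · ext j
      have h1 : (c • L (WithLp.toLp 2 (fun j => c⁻¹ * (ε (e.symm j) * w (e.symm j)) : Fin 3 → ℝ) : E3)
          + ppL m (vtx k)) j
          = c * (ε j * (c⁻¹ * (ε (e.symm (e j)) * w (e.symm (e j))))) + ppL m (vtx k) j := by
        have : ∀ (u v : E3) (j : Fin 3), (c • u + v) j = c * u j + v j := fun u v j => rfl
        rw [this, hL, WithLp.ofLp_toLp]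
      rw [h1, e.symm_apply_apply]
      have : c * (ε j * (c⁻¹ * (ε j * w j))) = (c * c⁻¹) * (ε j * ε j) * w j := by ring
      rw [this, mul_inv_cancel₀ (ne_of_gt hc0), hεsq, one_mul, one_mul, hwcoord]
      ring
  -- now prove the two inclusions
  apply Set.Subset.antisymm
  · rintro _ ⟨x, hxA, rfl⟩
    refine ⟨by rw [ppL_apply, if_pos rfl], fun j => ?_⟩
    rw [ppL_apply]
    split
    · simpa using ha.le
    · exact hbound x hxA j
  · intro z hz
    -- choose the addresses
    choose K Z hZmem hZeq using hstep
    set seq : ℕ → (Σ' (m : Fin 3) (y : E3), y ∈ Sq a m) :=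
      fun n => Nat.rec (⟨i, z, hz⟩ : Σ' (m : Fin 3) (y : E3), y ∈ Sq a m)
        (fun _ p => ⟨e p.1, Z p.1 p.2.1 p.2.2, hZmem p.1 p.2.1 p.2.2⟩) n with hseq_def
    set idx : ℕ → Fin 3 := fun n => (seq n).1 with hidx_def
    set ζ : ℕ → E3 := fun n => (seq n).2.1 with hζ_def
    set κ : ℕ → Fin 4 := fun n => K (seq n).1 (seq n).2.1 (seq n).2.2 with hκ_def
    have hidx0 : idx 0 = i := rfl
    have hζ0 : ζ 0 = z := rfl
    have hidxsucc : ∀ n, idx (n + 1) = e (idx n) := fun n => rfl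
    have hζmem : ∀ n, ζ n ∈ Sq a (idx n) := fun n => (seq n).2.2
    have hrec : ∀ n, ζ n = c • L (ζ (n + 1)) + ppL (idx n) (vtx (κ n)) := by
      intro n
      exact hZeq (seq n).1 (seq n).2.1 (seq n).2.2
    -- the orbit maps
    set G : ℕ → E3 → E3 :=
      fun n => Nat.rec id (fun m g => g ∘ fmap c P (κ m)) n with hG_def
    have hG0 : ∀ y, G 0 y = y := fun y => rfl
    have hGsucc : ∀ n y, G (n + 1) y = G n (fmap c P (κ n) y) := fun n y => rfl
    obtain ⟨y0, hy0⟩ := hAne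
    have hGmem : ∀ n, ∀ y ∈ A, G n y ∈ A := by
      intro n
      induction n with
      | zero => intro y hy; exact hy
      | succ n ih =>
        intro y hy
        rw [hGsucc]
        exact ih _ (hAsub (κ n) (Set.mem_image_of_mem _ hy))
    have hGdiff : ∀ n (u w : E3), ‖G n u - G n w‖ = c ^ n * ‖u - w‖ := by
      intro n
      induction n with
      | zero => intro u w; simp [hG0]
      | succ n ih =>
        intro u w
        rw [hGsucc, hGsucc, ih, hfdiff, norm_smul, hLiso, Real.norm_eq_abs,
          abs_of_pos hc0, pow_succ]
        ring
    have hGpp : ∀ n (y : E3), ‖ppL i (G n y) - z‖ = c ^ n * ‖ppL (idx n) y - ζ n‖ := by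
      intro n
      induction n with
      | zero => intro y; rw [hidx0, hζ0, hG0, pow_zero, one_mul]
      | succ n ih =>
        intro y
        rw [hGsucc, ih]
        have hinner : ppL (idx n) (fmap c P (κ n) y) - ζ n
            = c • L (ppL (idx (n + 1)) y - ζ (n + 1)) := by
          have h1 : ppL (idx n) (fmap c P (κ n) y)
              = c • L (ppL (e (idx n)) y) + ppL (idx n) (vtx (κ n)) := by
            have : fmap c P (κ n) y = c • L y + vtx (κ n) := rfl
            rw [this, map_add, _root_.map_smul, hcomm]
          rw [h1, hrec n, hidxsucc, map_sub, smul_sub]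
          abel
        rw [hinner, norm_smul, hLiso, Real.norm_eq_abs, abs_of_pos hc0, pow_succ]
        ring
    -- bound on the inner norms
    set B : ℝ := (∑ j, |y0 j|) + 3 * a with hB_def
    have hppbound : ∀ n, ‖ppL (idx n) y0 - ζ n‖ ≤ B := by
      intro n
      calc ‖ppL (idx n) y0 - ζ n‖ ≤ ∑ j, |(ppL (idx n) y0 - ζ n) j| := norm_le_sum_abs _
      _ ≤ ∑ j, (|y0 j| + a) := by
          apply Finset.sum_le_sum
          intro j _
          have hco : (ppL (idx n) y0 - ζ n) j = ppL (idx n) y0 j - ζ n j := rfl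
          rw [hco]
          calc |ppL (idx n) y0 j - ζ n j| ≤ |ppL (idx n) y0 j| + |ζ n j| := abs_sub _ _
          _ ≤ |y0 j| + a := by
              apply add_le_add
              · rw [ppL_apply]; split
                · simp
                · exact le_rfl
              · exact (hζmem n).2 j
      _ = B := by
          rw [Finset.sum_add_distrib, hB_def]
          simp [Finset.card_univ]
    -- Cauchy sequence
    set u : ℕ → E3 := fun n => G n y0 with hu_def
    have hdist : ∀ n, dist (u n) (u (n + 1)) ≤ (2 * ‖y0‖ + 3) * c ^ n := by
      intro n
      rw [dist_eq_norm, hu_def]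
      simp only
      rw [hGsucc, hGdiff]
      have hfn : ‖y0 - fmap c P (κ n) y0‖ ≤ 2 * ‖y0‖ + 3 := by
        have h2 : ‖fmap c P (κ n) y0‖ ≤ c * ‖y0‖ + 3 := by
          have : fmap c P (κ n) y0 = c • L y0 + vtx (κ n) := rfl
          rw [this]
          calc ‖c • L y0 + vtx (κ n)‖ ≤ ‖c • L y0‖ + ‖vtx (κ n)‖ := norm_add_le _ _
          _ ≤ c * ‖y0‖ + 3 := by
              apply add_le_add
              · rw [norm_smul, hLiso, Real.norm_eq_abs, abs_of_pos hc0]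
              · calc ‖vtx (κ n)‖ ≤ ∑ j, |vtx (κ n) j| := norm_le_sum_abs _
                _ ≤ ∑ _j : Fin 3, (1:ℝ) := Finset.sum_le_sum fun j _ => vtx_abs _ j
                _ = 3 := by simp
        calc ‖y0 - fmap c P (κ n) y0‖ ≤ ‖y0‖ + ‖fmap c P (κ n) y0‖ := norm_sub_le _ _
        _ ≤ 2 * ‖y0‖ + 3 := by nlinarith [norm_nonneg y0, h2, hc1.le]
      calc c ^ n * ‖y0 - fmap c P (κ n) y0‖ ≤ c ^ n * (2 * ‖y0‖ + 3) :=
        mul_le_mul_of_nonneg_left hfn (by positivity)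
      _ = (2 * ‖y0‖ + 3) * c ^ n := by ring
    have hcauchy : CauchySeq u := cauchySeq_of_le_geometric c (2 * ‖y0‖ + 3) hc1 hdist
    obtain ⟨x, hx⟩ := cauchySeq_tendsto_of_complete hcauchy
    have hxA : x ∈ A :=
      hAcp.isClosed.mem_of_tendsto hx (Filter.Eventually.of_forall fun n => hGmem n y0 hy0)
    have hppcont : Continuous (ppL i) := LinearMap.continuous_of_finiteDimensional _
    have h1 : Filter.Tendsto (fun n => ppL i (u n)) Filter.atTop (nhds (ppL i x)) :=
      (hppcont.tendsto x).comp hx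
    have h2 : Filter.Tendsto (fun n => ppL i (u n)) Filter.atTop (nhds z) := by
      rw [tendsto_iff_dist_tendsto_zero]
      apply squeeze_zero (fun n => dist_nonneg)
        (g := fun n => B * c ^ n)
      · intro n
        rw [dist_eq_norm, hu_def]
        simp only
        rw [hGpp]
        calc c ^ n * ‖ppL (idx n) y0 - ζ n‖ ≤ c ^ n * B :=
          mul_le_mul_of_nonneg_left (hppbound n) (by positivity)
        _ = B * c ^ n := by ring
      · simpa using (tendsto_pow_atTop_nhds_zero_of_lt_one hc0.le hc1).const_mul B
    exact ⟨x, hxA, tendsto_nhds_unique h1 h2⟩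

end AttractorProof

namespace AttractorProof

lemma ppL_cube {a : ℝ} (ha : 0 < a) (i : Fin 3) : ppL i '' (cubeImage a 1 0) = Sq a i := by
  have hcube : cubeImage a 1 0 = {x : E3 | ∀ j, |x j| ≤ a} := by
    ext y
    simp only [cubeImage, Set.mem_image, toEL_one, add_zero, Set.mem_setOf_eq]
    constructor
    · rintro ⟨x, hx, rfl⟩ j
      have h1 : (a • x) j = a * x j := rfl
      rw [h1, abs_mul, abs_of_pos ha]
      have h2 := hx j; rw [Set.mem_Icc] at h2
      have h3 : |x j| ≤ 1 := abs_le.mpr h2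
      nlinarith
    · intro hy
      refine ⟨a⁻¹ • y, fun j => ?_, ?_⟩
      · have h1 : (a⁻¹ • y) j = a⁻¹ * y j := rfl
        rw [h1, Set.mem_Icc, ← abs_le, abs_mul, abs_of_pos (by positivity : (0:ℝ) < a⁻¹)]
        calc a⁻¹ * |y j| ≤ a⁻¹ * a := mul_le_mul_of_nonneg_left (hy j) (by positivity)
        _ = 1 := by field_simp
      · rw [smul_inv_smul₀ (ne_of_gt ha)]
  rw [hcube]
  ext zz
  constructor
  · rintro ⟨x, hx, rfl⟩
    refine ⟨by rw [ppL_apply, if_pos rfl], fun j => ?_⟩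
    rw [ppL_apply]; split
    · simpa using ha.le
    · exact hx j
  · rintro ⟨hz1, hz2⟩
    refine ⟨zz, hz2, ?_⟩
    ext k
    rw [ppL_apply]
    split <;> rename_i hk
    · rw [hk, hz1]
    · rfl

end AttractorProof

theorem attractor_isImaginaryCube (c : ℝ) (hc : c ∈ Set.Ico (1 / 2 : ℝ) 1)
    (P : Matrix (Fin 3) (Fin 3) ℝ) (hP : P ∈ Matrix.specialOrthogonalGroup (Fin 3) ℝ)
    (hPC : Matrix.toEuclideanLin P '' C0 = C0)
    (A : Set E3) (hA : IsAttractor c P A) :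
    IsImaginaryCubeOf A ((1 / (1 - c)) • C0) := by
  classical
  obtain ⟨e, ε, hε, hL⟩ := AttractorProof.signed_perm hP hPC
  have hc0 : (0:ℝ) < c := lt_of_lt_of_le (by norm_num) hc.1
  have h1c : (0:ℝ) < 1 - c := by linarith [hc.2]
  have ha : 0 < 1 / (1 - c) := by positivity
  have hcube : (1 / (1 - c)) • C0 = cubeImage (1 / (1 - c)) 1 0 := by
    ext y
    rw [Set.mem_smul_set]
    simp only [cubeImage, Set.mem_image, AttractorProof.toEL_one, add_zero]
  refine ⟨1 / (1 - c), 1, 0, ha, one_mem _, hcube, ?_⟩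
  intro i
  apply Set.image_injective.mpr (Subtype.val_injective (p := (· ∈ facePlane 1 i)))
  have key : ∀ S : Set E3,
      Subtype.val '' ((Submodule.orthogonalProjection (facePlane 1 i)) '' S)
        = AttractorProof.ppL i '' S := by
    intro S
    rw [← Set.image_comp]
    exact Set.image_congr fun x _ => AttractorProof.proj_eq_ppL i x
  rw [key, key, AttractorProof.projA hc hε hL hA i, AttractorProof.ppL_cube ha i]
end
end

section
/- Let A = A(c,P) be contained in a cube C, and suppose a, b ∈ A lie on two parallel faces S and T of C respectively. Then a and b cannot lie in the same piece: there exist i ≠ j in {1,2,3,4} with a ∈ A_i and b ∈ A_j. -/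
/- STATEMENT 8: If the attractor A = A(c,P) is contained in a cube C and points p, q ∈ A
lie on two parallel (distinct) faces of C, then p and q lie in different pieces:
there are i ≠ j with p ∈ A_i and q ∈ A_j. -/

noncomputable section
open Matrix

/-- The face of the cube `a Q C₀ + w` in coordinate direction `k` with sign `σ`. -/
def cubeFace (a : ℝ) (Q : Matrix (Fin 3) (Fin 3) ℝ) (w : E3) (k : Fin 3) (σ : ℝ) : Set E3 :=
  (fun x => a • Matrix.toEuclideanLin Q x + w) '' {x ∈ C0 | x k = σ}

lemma key_sum (a : ℝ) (Q : Matrix (Fin 3) (Fin 3) ℝ) (hQ1 : Qᵀ * Q = 1) (w u : E3) (k : Fin 3) :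
    ∑ m, Q m k * (a • Matrix.toEuclideanLin Q u + w) m
      = a * u k + ∑ m, Q m k * w m := by
  have h1 : ∀ m, (a • Matrix.toEuclideanLin Q u + w) m
      = a * (∑ n, Q m n * u n) + w m := fun m => rfl
  have h2 : ∀ n : Fin 3, (∑ m, Q m k * Q m n) = if k = n then (1:ℝ) else 0 := by
    intro n
    have := congrFun (congrFun hQ1 k) n
    simpa [Matrix.mul_apply, Matrix.transpose_apply, Matrix.one_apply] using this
  simp only [h1, mul_add, Finset.sum_add_distrib]
  congr 1
  have h3 : ∑ m, Q m k * (a * ∑ n, Q m n * u n)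
      = ∑ n, (∑ m, Q m k * Q m n) * (a * u n) := by
    simp_rw [Finset.mul_sum, Finset.sum_mul]
    rw [Finset.sum_comm]
    refine Finset.sum_congr rfl fun m _ => Finset.sum_congr rfl fun n _ => by ring
  rw [h3]
  simp [h2, Finset.sum_ite_eq, mul_comm]

theorem parallel_faces_different_pieces (c : ℝ) (hc : c ∈ Set.Ioo (0 : ℝ) 1)
    (P : Matrix (Fin 3) (Fin 3) ℝ) (hP : P ∈ Matrix.specialOrthogonalGroup (Fin 3) ℝ)
    (A : Set E3) (hA : IsAttractor c P A)
    (a : ℝ) (Q : Matrix (Fin 3) (Fin 3) ℝ) (w : E3)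
    (ha : 0 < a) (hQ : Q ∈ Matrix.specialOrthogonalGroup (Fin 3) ℝ)
    (hsub : A ⊆ cubeImage a Q w)
    (p q : E3) (hp : p ∈ A) (hq : q ∈ A)
    (k : Fin 3) (σ τ : ℝ) (hσ : σ = 1 ∨ σ = -1) (hτ : τ = 1 ∨ τ = -1) (hστ : σ ≠ τ)
    (hpS : p ∈ cubeFace a Q w k σ) (hqT : q ∈ cubeFace a Q w k τ) :
    ∃ i j : Fin 4, i ≠ j ∧ p ∈ fmap c P i '' A ∧ q ∈ fmap c P j '' A := by
  obtain ⟨-, -, hfix⟩ := hA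
  have hp' := hp; rw [hfix] at hp'
  obtain ⟨i, hi⟩ := Set.mem_iUnion.mp hp'
  have hq' := hq; rw [hfix] at hq'
  obtain ⟨j, hj⟩ := Set.mem_iUnion.mp hq'
  refine ⟨i, j, fun hij => ?_, hi, hj⟩
  subst hij
  obtain ⟨x, hxA, hxp⟩ := hi
  obtain ⟨y, hyA, hyq⟩ := hj
  have hQ1 : Qᵀ * Q = 1 := by
    have h := (Matrix.mem_specialOrthogonalGroup_iff.mp hQ).1
    have h2 := (Matrix.mem_orthogonalGroup_iff' (Fin 3) ℝ).mp h
    simpa using h2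
  set φ : E3 → ℝ := fun z => ∑ m, Q m k * z m with hφ
  have hadd : ∀ z v : E3, φ (z + v) = φ z + φ v := by
    intro z v
    simp only [hφ]
    rw [← Finset.sum_add_distrib]
    exact Finset.sum_congr rfl fun m _ => by
      show Q m k * (z m + v m) = _ ; ring
  have hpv : φ p = a * σ + φ w := by
    obtain ⟨u, ⟨huC, huk⟩, hup⟩ := hpS
    rw [← hup]
    show ∑ m, Q m k * (a • Matrix.toEuclideanLin Q u + w) m = _
    rw [key_sum a Q hQ1 w u k, huk]
  have hqv : φ q = a * τ + φ w := by
    obtain ⟨u, ⟨huC, huk⟩, hup⟩ := hqT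
    rw [← hup]
    show ∑ m, Q m k * (a • Matrix.toEuclideanLin Q u + w) m = _
    rw [key_sum a Q hQ1 w u k, huk]
  have hcube : ∀ z ∈ cubeImage a Q w, φ w - a ≤ φ z ∧ φ z ≤ φ w + a := by
    rintro z ⟨u, huC, rfl⟩
    have hk := huC k
    have := key_sum a Q hQ1 w u k
    constructor
    · show φ w - a ≤ ∑ m, Q m k * (a • Matrix.toEuclideanLin Q u + w) m
      rw [this]; nlinarith [hk.1, hk.2]
    · show ∑ m, Q m k * (a • Matrix.toEuclideanLin Q u + w) m ≤ φ w + a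
      rw [this]; nlinarith [hk.1, hk.2]
  have hAl : ∀ l : Fin 4, fmap c P l x ∈ cubeImage a Q w := by
    intro l; apply hsub; rw [hfix]
    exact Set.mem_iUnion.mpr ⟨l, x, hxA, rfl⟩
  have hBl : ∀ l : Fin 4, fmap c P l y ∈ cubeImage a Q w := by
    intro l; apply hsub; rw [hfix]
    exact Set.mem_iUnion.mpr ⟨l, y, hyA, rfl⟩
  set r : ℝ := φ (c • Matrix.toEuclideanLin P x) with hr
  set r' : ℝ := φ (c • Matrix.toEuclideanLin P y) with hr'
  set s : Fin 4 → ℝ := fun l => φ (vtx l) with hs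
  have hfx : ∀ l, φ (fmap c P l x) = r + s l := fun l => hadd _ _
  have hfy : ∀ l, φ (fmap c P l y) = r' + s l := fun l => hadd _ _
  have hpi : r + s i = a * σ + φ w := by rw [← hfx i, hxp, hpv]
  have hqi : r' + s i = a * τ + φ w := by rw [← hfy i, hyq, hqv]
  have hsl : ∀ l, s l = s i := by
    intro l
    have h1 := hcube _ (hAl l)
    have h2 := hcube _ (hBl l)
    rw [hfx l] at h1
    rw [hfy l] at h2
    rcases hσ with rfl | rfl <;> rcases hτ with rfl | rfl
    · exact absurd rfl hστ
    · linarith [h1.2, h2.1]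
    · linarith [h1.1, h2.2]
    · exact absurd rfl hστ
  have hv : ∀ l : Fin 4, s l = Q 0 k * vtx l 0 + Q 1 k * vtx l 1 + Q 2 k * vtx l 2 := by
    intro l
    show ∑ m, Q m k * vtx l m = _
    rw [Fin.sum_univ_three]
  have e0 := hv 0; have e1 := hv 1; have e2 := hv 2; have e3 := hv 3
  simp [vtx] at e0 e1 e2 e3
  have h01 : s 0 = s 1 := by rw [hsl 0, hsl 1]
  have h02 : s 0 = s 2 := by rw [hsl 0, hsl 2]
  have h03 : s 0 = s 3 := by rw [hsl 0, hsl 3]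
  have hz0 : Q 0 k = 0 := by rw [e0, e1] at h01; rw [e0, e2] at h02; rw [e0, e3] at h03; linarith
  have hz1 : Q 1 k = 0 := by rw [e0, e1] at h01; rw [e0, e2] at h02; rw [e0, e3] at h03; linarith
  have hz2 : Q 2 k = 0 := by rw [e0, e1] at h01; rw [e0, e2] at h02; rw [e0, e3] at h03; linarith
  have hone : (∑ m, Q m k * Q m k) = 1 := by
    have := congrFun (congrFun hQ1 k) k
    simpa [Matrix.mul_apply, Matrix.transpose_apply, Matrix.one_apply] using this
  rw [Fin.sum_univ_three, hz0, hz1, hz2] at hone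
  norm_num at hone
end
end
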